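/- arXiv:2011.09975 — 2 statements merged into one kernel-verified Lean document; each statement's English description precedes it below -/
import Mathlib

section
/- Let n ≥ 1, g ∈ ℂ[t_1,...,t_n] with g(0) = 0, a ∈ ℂ, and consider the sl(n+1)-module T(g, V_a, ∅) with underlying space e^g ℂ[t_1,...,t_n], where e_{i,n+1} acts (via the differential operator presentation with S = ∅ and 1-dimensional gl(n)-module V_a of weight a·tr) so that the coefficient of e^g t^m t_i^{-1} in e_{i,n+1}(e^g t^m) equals m_i (Σ_{j=1}^n m_j - 1 - (n+1)(a-1)). If (n+1)(a-1) ∉ ℤ, then T(g, V_a, ∅) is a simple sl(n+1)-module. -/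
open LieAlgebra.SpecialLinear Matrix MvPolynomial

attribute [local instance] LieRing.ofAssociativeRing

/-- The twisted derivative `∂̃_i = ∂_i + (∂_i g)·` acting on `ℂ[t]`
(the action of `∂_i` on `e^g ℂ[t]`, written on the coefficient `f` of `e^g f`). -/
noncomputable def Dtw {n : ℕ} (g : MvPolynomial (Fin n) ℂ) (i : Fin n)
    (f : MvPolynomial (Fin n) ℂ) : MvPolynomial (Fin n) ℂ :=
  pderiv i f + pderiv i g * f


/-- Euler operator `∑ k, X k * ∂_k`. -/
noncomputable def Eul {n : ℕ} (f : MvPolynomial (Fin n) ℂ) : MvPolynomial (Fin n) ℂ :=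
  ∑ k : Fin n, X k * pderiv k f

lemma coeff_pderiv_aux {n : ℕ} (k : Fin n) (f : MvPolynomial (Fin n) ℂ) (m : Fin n →₀ ℕ) :
    coeff m (pderiv k f) = ((m k : ℂ) + 1) * coeff (m + Finsupp.single k 1) f := by
  induction f using MvPolynomial.induction_on' with
  | add p q hp hq => simp [hp, hq]; ring
  | monomial s c =>
    rw [pderiv_monomial, coeff_monomial, coeff_monomial]
    by_cases h : s = m + Finsupp.single k 1
    · subst h
      have h1 : m + Finsupp.single k 1 - Finsupp.single k 1 = m := by
        ext j; simp
      have h2 : (m + Finsupp.single k 1 : Fin n →₀ ℕ) k = m k + 1 := by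
        simp
      rw [if_pos h1, if_pos rfl, h2]
      push_cast; ring
    · rw [if_neg h]
      by_cases h2 : s - Finsupp.single k 1 = m
      · rw [if_pos h2]
        by_cases hk : s k = 0
        · simp [hk]
        · exfalso
          apply h
          rw [← h2, tsub_add_cancel_of_le]
          exact Finsupp.single_le_iff.2 (Nat.one_le_iff_ne_zero.2 hk)
      · rw [if_neg h2]; ring

lemma coeff_eul {n : ℕ} (f : MvPolynomial (Fin n) ℂ) (m : Fin n →₀ ℕ) :
    coeff m (Eul f) = (m.degree : ℂ) * coeff m f := by
  classical
  rw [Eul, coeff_sum]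
  have key : ∀ k : Fin n, coeff m (X k * pderiv k f) = (m k : ℂ) * coeff m f := by
    intro k
    rw [coeff_X_mul']
    by_cases hk : k ∈ m.support
    · rw [if_pos hk, coeff_pderiv_aux]
      have h1 : (m - Finsupp.single k 1) + Finsupp.single k 1 = m :=
        tsub_add_cancel_of_le (Finsupp.single_le_iff.2
          (Nat.one_le_iff_ne_zero.2 (Finsupp.mem_support_iff.1 hk)))
      have h2 : (m - Finsupp.single k 1 : Fin n →₀ ℕ) k = m k - 1 := by
        rw [Finsupp.tsub_apply]; simp
      rw [h1, h2]
      have hne : m k ≠ 0 := Finsupp.mem_support_iff.1 hk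
      congr 1
      rw [Nat.cast_sub (Nat.one_le_iff_ne_zero.2 hne)]
      push_cast
      ring
    · rw [if_neg hk]
      have : m k = 0 := Finsupp.notMem_support_iff.1 hk
      simp [this]
  simp_rw [key]
  rw [← Finset.sum_mul]
  congr 1
  rw [Finsupp.degree_apply]
  push_cast
  rw [Finset.sum_subset (Finset.subset_univ m.support)]
  intro x _ hx
  simp [Finsupp.notMem_support_iff.1 hx]

lemma comp_eul {n : ℕ} (d : ℕ) (f : MvPolynomial (Fin n) ℂ) :
    homogeneousComponent d (Eul f) = (d : ℂ) • homogeneousComponent d f := by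
  ext m
  rw [coeff_smul, coeff_homogeneousComponent, coeff_homogeneousComponent]
  by_cases h : m.degree = d
  · rw [if_pos h, if_pos h, coeff_eul, h]; rfl
  · rw [if_neg h, if_neg h, smul_zero]

lemma totalDegree_le_of_coeff {n : ℕ} (f : MvPolynomial (Fin n) ℂ) (N : ℕ)
    (h : ∀ m : Fin n →₀ ℕ, N < m.degree → coeff m f = 0) : f.totalDegree ≤ N := by
  rw [totalDegree]
  apply Finset.sup_le
  intro m hm
  by_contra hc
  exact (MvPolynomial.mem_support_iff.1 hm) (h m (lt_of_not_ge hc))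

lemma degree_add_single {n : ℕ} (m : Fin n →₀ ℕ) (k : Fin n) :
    (m + Finsupp.single k 1).degree = m.degree + 1 := by
  classical
  have key : ∀ u : Fin n →₀ ℕ, u.degree = ∑ j : Fin n, u j := by
    intro u
    rw [Finsupp.degree_apply]
    exact Finset.sum_subset (Finset.subset_univ _)
      (fun x _ hx => Finsupp.notMem_support_iff.1 hx)
  rw [key, key]
  have : ∀ j : Fin n, (m + Finsupp.single k 1 : Fin n →₀ ℕ) j
      = m j + Finsupp.single k 1 j := fun j => rfl
  simp_rw [this]
  rw [Finset.sum_add_distrib]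
  congr 1
  simp [Finsupp.single_apply]

lemma comp_totalDegree_ne_zero {n : ℕ} (f : MvPolynomial (Fin n) ℂ) (hf : f ≠ 0) :
    homogeneousComponent f.totalDegree f ≠ 0 := by
  obtain ⟨m, hm, hdeg⟩ := Finset.exists_mem_eq_sup f.support
    (MvPolynomial.support_nonempty.2 hf) (fun s => s.sum fun _ e => e)
  intro h0
  have : coeff m (homogeneousComponent f.totalDegree f) = coeff m f := by
    rw [coeff_homogeneousComponent, if_pos]
    rw [totalDegree, hdeg]; rfl
  rw [h0] at this
  exact (MvPolynomial.mem_support_iff.1 hm) (by simpa using this.symm)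

lemma comp_zero_of_totalDegree_zero {n : ℕ} (f : MvPolynomial (Fin n) ℂ)
    (h : f.totalDegree = 0) : homogeneousComponent 0 f = f := by
  conv_rhs => rw [← sum_homogeneousComponent f]
  rw [h, Finset.sum_range_one]


/-- if `(n+1)(a-1) ∉ ℤ`, then the exponential tensor module
`T(g, V_a, ∅) = e^g ℂ[t]` (with the `sl(n+1)`-action of the Rudakov–Shen presentation
`ω_{V_a,∅}` twisted by `θ_g`, `V_a` being the one-dimensional `gl(n)`-module of weight
`a·tr`) is a simple `sl(n+1)`-module. -/
theorem exponential_tensor_module_simple_of_nonintegral (n : ℕ) (hn : 1 ≤ n)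
    (g : MvPolynomial (Fin n) ℂ) (hg : constantCoeff g = 0) (a : ℂ)
    (ha : ∀ m : ℤ, ((n : ℂ) + 1) * (a - 1) ≠ m)
    (π : sl (Fin (n + 1)) ℂ →ₗ⁅ℂ⁆ Module.End ℂ (MvPolynomial (Fin n) ℂ))
    -- h_k acts by h_k·(e^g f) = -t_k ∂_k(g) e^g f - e^g t_k ∂_k f + (1-a) e^g f
    (hπh : ∀ (k : Fin n) (Y : sl (Fin (n + 1)) ℂ),
      (Y : Matrix (Fin (n + 1)) (Fin (n + 1)) ℂ) =
          Matrix.single k.castSucc k.castSucc 1 - ((n : ℂ) + 1)⁻¹ • 1 →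
        ∀ f, π Y f = -(X k * pderiv k g * f) - X k * pderiv k f + (1 - a) • f)
    -- e_{i,j}·(e^g f) = -e^g (t_j ∂_i + t_j ∂_i(g)) f for i ≠ j ≤ n
    (hπe : ∀ (i j : Fin n), i ≠ j → ∀ Y : sl (Fin (n + 1)) ℂ,
      (Y : Matrix (Fin (n + 1)) (Fin (n + 1)) ℂ) =
          Matrix.single i.castSucc j.castSucc 1 →
        ∀ f, π Y f = -(X j * Dtw g i f))
    -- e_{n+1,j}·(e^g f) = -t_j e^g f
    (hπlow : ∀ (j : Fin n) (Y : sl (Fin (n + 1)) ℂ),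
      (Y : Matrix (Fin (n + 1)) (Fin (n + 1)) ℂ) =
          Matrix.single (Fin.last n) j.castSucc 1 →
        ∀ f, π Y f = -(X j * f))
    -- e_{i,n+1} acts as in ω_{V_a,∅} (twisted by θ_g)
    (hπup : ∀ (i : Fin n) (Y : sl (Fin (n + 1)) ℂ),
      (Y : Matrix (Fin (n + 1)) (Fin (n + 1)) ℂ) =
          Matrix.single i.castSucc (Fin.last n) 1 →
        ∀ f, π Y f = -(a • Dtw g i f) + (∑ j : Fin n, X j * Dtw g j (Dtw g i f))
          - (n : ℂ) • (a • Dtw g i f) + ((n : ℂ) + 1) • Dtw g i f) :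
    ∀ W : Submodule ℂ (MvPolynomial (Fin n) ℂ),
      (∀ (Y : sl (Fin (n + 1)) ℂ), ∀ w ∈ W, π Y w ∈ W) → W = ⊥ ∨ W = ⊤ := by
  intro W hW
  -- Step 1: W is closed under multiplication by X j.
  have hX : ∀ (j : Fin n) (f : MvPolynomial (Fin n) ℂ), f ∈ W → X j * f ∈ W := by
    intro j f hf
    have hne : (j.castSucc : Fin (n + 1)) ≠ Fin.last n := (Fin.castSucc_lt_last j).ne
    have hY := hπlow j (LieAlgebra.SpecialLinear.single (Fin.last n) j.castSucc hne.symm (1:ℂ)) rfl f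
    have : X j * f = -(π (LieAlgebra.SpecialLinear.single (Fin.last n) j.castSucc hne.symm (1:ℂ)) f) := by rw [hY]; ring
    rw [this]
    exact W.neg_mem (hW _ f hf)
  -- Step 2: W is closed under multiplication by arbitrary polynomials.
  have hmul : ∀ (q f : MvPolynomial (Fin n) ℂ), f ∈ W → q * f ∈ W := by
    intro q
    induction q using MvPolynomial.induction_on with
    | C c => intro f hf; rw [C_mul']; exact W.smul_mem c hf
    | add p q hp hq => intro f hf; rw [add_mul]; exact W.add_mem (hp f hf) (hq f hf)
    | mul_X p j hp =>
        intro f hf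
        have : p * X j * f = X j * (p * f) := by ring
        rw [this]; exact hX j _ (hp f hf)
  -- Step 3: W is closed under f ↦ X k * Dtw g k f (from the Cartan part).
  have hHk : ∀ (k : Fin n) (f : MvPolynomial (Fin n) ℂ), f ∈ W → X k * Dtw g k f ∈ W := by
    intro k f hf
    have hmem : (Matrix.single k.castSucc k.castSucc (1:ℂ) - ((n : ℂ) + 1)⁻¹ • 1)
        ∈ sl (Fin (n+1)) ℂ := by
      show _ ∈ LinearMap.ker (Matrix.traceLinearMap (Fin (n+1)) ℂ ℂ)
      rw [LinearMap.mem_ker, Matrix.traceLinearMap_apply, Matrix.trace_sub, Matrix.trace_smul,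
        Matrix.trace_single_eq_same, Matrix.trace_one]
      simp only [Fintype.card_fin, smul_eq_mul, Nat.cast_add, Nat.cast_one]
      rw [inv_mul_cancel₀ (Nat.cast_add_one_ne_zero n), sub_self]
    have hY := hπh k ⟨_, hmem⟩ rfl f
    have : X k * Dtw g k f = (1 - a) • f - π ⟨_, hmem⟩ f := by
      rw [hY, Dtw, smul_eq_C_mul]; ring
    rw [this]
    exact W.sub_mem (W.smul_mem _ hf) (hW _ f hf)
  -- Step 4: W is closed under f ↦ X j * Dtw g i f for all i, j.
  have hXDij : ∀ (i j : Fin n) (f : MvPolynomial (Fin n) ℂ), f ∈ W → X j * Dtw g i f ∈ W := by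
    intro i j f hf
    by_cases hij : i = j
    · subst hij; exact hHk i f hf
    · have hne : (j.castSucc : Fin (n + 1)) ≠ i.castSucc := by
        simpa [Fin.castSucc_inj] using Ne.symm hij
      have hY := hπe i j hij (LieAlgebra.SpecialLinear.single i.castSucc j.castSucc hne.symm (1:ℂ)) rfl f
      have : X j * Dtw g i f = -(π (LieAlgebra.SpecialLinear.single i.castSucc j.castSucc hne.symm (1:ℂ)) f) := by rw [hY]; ring
      rw [this]; exact W.neg_mem (hW _ f hf)
  -- Step 5: W is closed under the Euler operator.
  have hEulW : ∀ f, f ∈ W → Eul f ∈ W := by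
    intro f hf
    have : Eul f = ∑ k : Fin n, (X k * Dtw g k f - pderiv k g * (X k * f)) := by
      rw [Eul]
      refine Finset.sum_congr rfl fun k _ => ?_
      rw [Dtw]; ring
    rw [this]
    exact Submodule.sum_mem W fun k _ => W.sub_mem (hHk k f hf) (hmul _ _ (hX k f hf))
  -- Step 6: W contains all homogeneous components of its elements.
  have hcomp : ∀ (N : ℕ) (f : MvPolynomial (Fin n) ℂ), f ∈ W → f.totalDegree ≤ N →
      ∀ d, homogeneousComponent d f ∈ W := by
    intro N
    induction N with
    | zero =>
      intro f hf hdeg d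
      have hd0 : f.totalDegree = 0 := Nat.le_zero.1 hdeg
      match d with
      | 0 => rw [comp_zero_of_totalDegree_zero f hd0]; exact hf
      | (d+1) =>
        rw [homogeneousComponent_eq_zero _ _ (by omega)]
        exact W.zero_mem
    | succ N IH =>
      intro f hf hdeg d
      by_cases hle : f.totalDegree ≤ N
      · exact IH f hf hle d
      have hdeq : f.totalDegree = N + 1 := le_antisymm hdeg (by omega)
      set w := Eul f - ((N : ℂ) + 1) • f with hwdef
      have hwW : w ∈ W := W.sub_mem (hEulW f hf) (W.smul_mem _ hf)
      have hwdeg : w.totalDegree ≤ N := by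
        apply totalDegree_le_of_coeff
        intro m hm
        rw [hwdef, coeff_sub, coeff_eul, coeff_smul]
        rcases Nat.lt_or_ge (N + 1) m.degree with hgt | hge
        · have : coeff m f = 0 := by
            apply coeff_eq_zero_of_totalDegree_lt
            rw [hdeq]
            exact hgt
          rw [this]; simp
        · have hmd : m.degree = N + 1 := by omega
          rw [hmd]; push_cast [smul_eq_mul]; ring
      have hcompd : ∀ d', d' ≠ N + 1 → homogeneousComponent d' f ∈ W := by
        intro d' hd'
        have h1 := IH w hwW hwdeg d'
        have h2 : homogeneousComponent d' w = ((d' : ℂ) - ((N : ℂ) + 1)) •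
            homogeneousComponent d' f := by
          rw [hwdef, map_sub, comp_eul, LinearMap.map_smul, sub_smul]
        have hne : ((d' : ℂ) - ((N : ℂ) + 1)) ≠ 0 := by
          rw [sub_ne_zero]
          exact_mod_cast fun h => hd' (by exact_mod_cast h)
        rw [h2] at h1
        have : homogeneousComponent d' f =
            ((d' : ℂ) - ((N : ℂ) + 1))⁻¹ • (((d' : ℂ) - ((N : ℂ) + 1)) •
              homogeneousComponent d' f) := by
          rw [smul_smul, inv_mul_cancel₀ hne, one_smul]
        rw [this]
        exact W.smul_mem _ h1
      by_cases hdN : d = N + 1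
      · subst hdN
        have hsum : ∑ d' ∈ Finset.range (N + 2), homogeneousComponent d' f = f := by
          have := sum_homogeneousComponent f
          rwa [hdeq] at this
        rw [Finset.sum_range_succ] at hsum
        rw [eq_sub_of_add_eq' hsum]
        exact W.sub_mem hf (Submodule.sum_mem W fun d' hd' =>
          hcompd d' (by have := Finset.mem_range.1 hd'; omega))
      · exact hcompd d hdN
  -- Step 7: W is closed under the twisted derivatives Dtw g i.
  have hD : ∀ (i : Fin n) (f : MvPolynomial (Fin n) ℂ), f ∈ W → Dtw g i f ∈ W := by
    intro i f hf
    set u := Dtw g i f with hu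
    set c : ℂ := ((n : ℂ) + 1) * (a - 1) with hc
    have hne2 : (Fin.last n : Fin (n + 1)) ≠ i.castSucc := (Fin.castSucc_lt_last i).ne'
    have hY := hπup i (LieAlgebra.SpecialLinear.single i.castSucc (Fin.last n) hne2.symm (1:ℂ)) rfl f
    have hsum : ∑ j : Fin n, X j * Dtw g j u =
        Eul u + ∑ j : Fin n, pderiv j g * (X j * u) := by
      rw [Eul, ← Finset.sum_add_distrib]
      refine Finset.sum_congr rfl fun j _ => ?_
      rw [Dtw]; ring
    have hEu : Eul u - c • u =
        π (LieAlgebra.SpecialLinear.single i.castSucc (Fin.last n) hne2.symm (1:ℂ)) f - ∑ j : Fin n, pderiv j g * (X j * u) := by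
      rw [hY, ← hu, hsum, hc]
      simp only [smul_eq_C_mul, _root_.map_mul, _root_.map_add, _root_.map_sub, _root_.map_one, map_natCast]
      ring
    have hwW : Eul u - c • u ∈ W := by
      rw [hEu]
      exact W.sub_mem (hW _ f hf)
        (Submodule.sum_mem W fun j _ => hmul _ _ (hXDij i j f hf))
    have hcompu : ∀ d, homogeneousComponent d u ∈ W := by
      intro d
      have h1 := hcomp (Eul u - c • u).totalDegree _ hwW le_rfl d
      have h2 : homogeneousComponent d (Eul u - c • u) =
          ((d : ℂ) - c) • homogeneousComponent d u := by
        rw [map_sub, comp_eul, LinearMap.map_smul, sub_smul]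
      have hne : (d : ℂ) - c ≠ 0 := by
        rw [sub_ne_zero]
        intro h
        exact ha (d : ℤ) (by rw [← h]; push_cast; ring)
      rw [h2] at h1
      have : homogeneousComponent d u =
          ((d : ℂ) - c)⁻¹ • (((d : ℂ) - c) • homogeneousComponent d u) := by
        rw [smul_smul, inv_mul_cancel₀ hne, one_smul]
      rw [this]
      exact W.smul_mem _ h1
    have hrepr : u = ∑ d ∈ Finset.range (u.totalDegree + 1), homogeneousComponent d u :=
      (sum_homogeneousComponent u).symm
    show u ∈ W
    rw [hrepr]
    exact Submodule.sum_mem W fun d _ => hcompu d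
  -- Step 8: W is closed under plain partial derivatives.
  have hpd : ∀ (i : Fin n) (f : MvPolynomial (Fin n) ℂ), f ∈ W → pderiv i f ∈ W := by
    intro i f hf
    have : pderiv i f = Dtw g i f - pderiv i g * f := by rw [Dtw]; ring
    rw [this]
    exact W.sub_mem (hD i f hf) (hmul _ _ hf)
  -- Final step.
  by_cases hbot : W = ⊥
  · exact Or.inl hbot
  right
  obtain ⟨f₀, hf₀W, hf₀⟩ := (Submodule.ne_bot_iff W).1 hbot
  have hone : ∀ (N : ℕ) (f : MvPolynomial (Fin n) ℂ), f ∈ W → f ≠ 0 → f.totalDegree ≤ N →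
      (1 : MvPolynomial (Fin n) ℂ) ∈ W := by
    intro N
    induction N with
    | zero =>
      intro f hf hf0 hdeg
      have hd0 : f.totalDegree = 0 := Nat.le_zero.1 hdeg
      have hfc : f = C (coeff 0 f) := by
        conv_lhs => rw [← comp_zero_of_totalDegree_zero f hd0]
        rw [homogeneousComponent_zero]
      obtain ⟨c, hcf⟩ : ∃ c : ℂ, f = C c := ⟨_, hfc⟩
      have hc : c ≠ 0 := by
        intro h
        exact hf0 (by rw [hcf, h, map_zero])
      have h1 : (1 : MvPolynomial (Fin n) ℂ) = c⁻¹ • f := by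
        rw [hcf, smul_eq_C_mul, ← C_mul, inv_mul_cancel₀ hc, C_1]
      rw [h1]
      exact W.smul_mem _ hf
    | succ N IH =>
      intro f hf hf0 hdeg
      by_cases hle : f.totalDegree ≤ N
      · exact IH f hf hf0 hle
      have hdeq : f.totalDegree = N + 1 := le_antisymm hdeg (by omega)
      set h := homogeneousComponent (N + 1) f with hh
      have hhW : h ∈ W := hcomp (N + 1) f hf hdeg (N + 1)
      have hh0 : h ≠ 0 := by
        rw [hh, ← hdeq]
        exact comp_totalDegree_ne_zero f hf0
      have hEulh : Eul h = ((N : ℂ) + 1) • h := by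
        ext m
        rw [coeff_eul, coeff_smul]
        by_cases hm : coeff m h = 0
        · rw [hm]; simp
        · have hmd : m.degree = N + 1 := by
            by_contra hmd
            exact hm (by rw [hh, coeff_homogeneousComponent, if_neg hmd])
          rw [hmd, smul_eq_mul]
          push_cast
          ring
      have hne0 : Eul h ≠ 0 := by
        rw [hEulh]
        exact smul_ne_zero (Nat.cast_add_one_ne_zero N) hh0
      rw [Eul] at hne0
      obtain ⟨k, -, hk⟩ := Finset.exists_ne_zero_of_sum_ne_zero hne0
      have hpk : pderiv k h ≠ 0 := fun h0 => hk (by rw [h0, mul_zero])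
      have hdegk : (pderiv k h).totalDegree ≤ N := by
        apply totalDegree_le_of_coeff
        intro m hm
        rw [coeff_pderiv_aux]
        have : coeff (m + Finsupp.single k 1) h = 0 := by
          rw [hh, coeff_homogeneousComponent, if_neg]
          rw [degree_add_single]
          omega
        rw [this, mul_zero]
      exact IH (pderiv k h) (hpd k h hhW) hpk hdegk
  have h1 : (1 : MvPolynomial (Fin n) ℂ) ∈ W := hone f₀.totalDegree f₀ hf₀W hf₀ le_rfl
  rw [Submodule.eq_top_iff']
  intro p
  have := hmul p 1 h1
  simpa using this
end

section
/- Let n ≥ 1, a ∈ ℂ with (n+1)(a-1) ∈ ℤ, g ∈ ℂ[t_1,...,t_n] with g(0)=0, and S ⊆ {1,...,n}. In the sl(n+1)-module T(g,V_a,S) with basis e^g t^m (m_i ∈ ℤ_{<0} for i ∈ S, m_i ∈ ℤ_{≥0} for i ∉ S), the subspace T' = span{ e^g t^m : Σ_{j=1}^n m_j ≥ (n+1)(a-1) + 1 } is an sl(n+1)-submodule. -/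
open LieAlgebra.SpecialLinear Matrix MvPolynomial
open scoped Classical

attribute [local instance 100] LieRing.ofAssociativeRing

/-- Exponents allowed for the module `e^g (ℂ[t])^{ψ_S} ≅ e^g D⁺_{(S)}(ℂ[t])`:
negative in the positions of `S`, nonnegative elsewhere. -/
def AllowedExp {n : ℕ} (S : Finset (Fin n)) (m : Fin n → ℤ) : Prop :=
  ∀ i, if i ∈ S then m i < 0 else 0 ≤ m i

/-- Underlying space of `T(g,V_a,S)`: formal span of the monomials `e^g t^m` with
`m` an allowed exponent. -/
def TgS (n : ℕ) (S : Finset (Fin n)) : Type :=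
  {m : Fin n → ℤ // AllowedExp S m} →₀ ℂ

noncomputable instance (n : ℕ) (S : Finset (Fin n)) : AddCommGroup (TgS n S) :=
  inferInstanceAs (AddCommGroup ({m : Fin n → ℤ // AllowedExp S m} →₀ ℂ))

noncomputable instance (n : ℕ) (S : Finset (Fin n)) : Module ℂ (TgS n S) :=
  inferInstanceAs (Module ℂ ({m : Fin n → ℤ // AllowedExp S m} →₀ ℂ))

/-- The basis monomial `e^g t^m` if `m` is allowed, `0` otherwise. -/
noncomputable def bmono {n : ℕ} (S : Finset (Fin n)) (m : Fin n → ℤ) : TgS n S :=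
  if h : AllowedExp S m then Finsupp.single ⟨m, h⟩ 1 else 0

/-- The action of `t_i` on `T(g,V_a,S)` (on exponents, with projection). -/
noncomputable def tOp {n : ℕ} (S : Finset (Fin n)) (i : Fin n) :
    Module.End ℂ (TgS n S) :=
  Finsupp.lift (TgS n S) ℂ {m : Fin n → ℤ // AllowedExp S m} fun m =>
    bmono S (Function.update m.1 i (m.1 i + 1))

/-- The action of `∂_i` (the nonexponential part) on `T(g,V_a,S)`. -/
noncomputable def dOp {n : ℕ} (S : Finset (Fin n)) (i : Fin n) :
    Module.End ℂ (TgS n S) :=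
  Finsupp.lift (TgS n S) ℂ {m : Fin n → ℤ // AllowedExp S m} fun m =>
    (m.1 i : ℂ) • bmono S (Function.update m.1 i (m.1 i - 1))

/-- Multiplication by a polynomial `p ∈ ℂ[t]` on `T(g,V_a,S)` (with projection). -/
noncomputable def pMul {n : ℕ} (S : Finset (Fin n)) (p : MvPolynomial (Fin n) ℂ) :
    Module.End ℂ (TgS n S) :=
  Finsupp.lift (TgS n S) ℂ {m : Fin n → ℤ // AllowedExp S m} fun m =>
    (AddMonoidAlgebra.coeff p).sum fun k c => c • bmono S (fun i => m.1 i + k i)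

/-- The action of `∂_i` on `e^g t^m`, i.e. `∂_i + (∂_i g)·`. -/
noncomputable def dgOp {n : ℕ} (S : Finset (Fin n)) (g : MvPolynomial (Fin n) ℂ)
    (i : Fin n) : Module.End ℂ (TgS n S) :=
  dOp S i + pMul S (pderiv i g)

section Aux
variable {n : ℕ} {S : Finset (Fin n)}

noncomputable def Td (S : Finset (Fin n)) (d : ℤ) : Submodule ℂ (TgS n S) :=
  Submodule.span ℂ {v : TgS n S | ∃ (m : Fin n → ℤ) (h : AllowedExp S m),
    d ≤ ∑ i, m i ∧ v = Finsupp.single ⟨m, h⟩ 1}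

lemma single_mem_Td {d : ℤ} {m : Fin n → ℤ} (h : AllowedExp S m) (hd : d ≤ ∑ i, m i) :
    (Finsupp.single ⟨m, h⟩ 1 : TgS n S) ∈ Td S d :=
  Submodule.subset_span ⟨m, h, hd, rfl⟩

lemma bmono_mem_Td {d : ℤ} {m : Fin n → ℤ} (hd : d ≤ ∑ i, m i) :
    bmono S m ∈ Td S d := by
  unfold bmono
  by_cases h : AllowedExp S m
  · simp only [h, ↓reduceDIte]; exact single_mem_Td _ hd
  · simp only [h, ↓reduceDIte]; exact zero_mem _

lemma Td_mono {d e : ℤ} (h : d ≤ e) : Td S e ≤ Td S d :=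
  Submodule.span_mono (fun v ⟨m, hm, hd, hv⟩ => ⟨m, hm, h.trans hd, hv⟩)


lemma lift_single {X : Type} {M : Type} [AddCommGroup M] [Module ℂ M]
    (f : X → M) (x : X) :
    Finsupp.lift M ℂ X f (Finsupp.single x (1:ℂ)) = f x := by
  simp [Finsupp.lift_apply, Finsupp.sum_single_index]

lemma tOp_single {m : Fin n → ℤ} (h : AllowedExp S m) (i : Fin n) :
    tOp S i (Finsupp.single ⟨m, h⟩ 1) = bmono S (Function.update m i (m i + 1)) :=
  lift_single _ _

lemma dOp_single {m : Fin n → ℤ} (h : AllowedExp S m) (i : Fin n) :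
    dOp S i (Finsupp.single ⟨m, h⟩ 1)
      = (m i : ℂ) • bmono S (Function.update m i (m i - 1)) :=
  lift_single _ _

lemma pMul_single {m : Fin n → ℤ} (h : AllowedExp S m) (p : MvPolynomial (Fin n) ℂ) :
    pMul S p (Finsupp.single ⟨m, h⟩ 1)
      = (AddMonoidAlgebra.coeff p).sum fun k c => c • bmono S (fun i => m i + k i) :=
  lift_single _ _

lemma sum_update (m : Fin n → ℤ) (i : Fin n) (c : ℤ) :
    ∑ j, Function.update m i c j = c + (∑ j, m j) - m i := by
  rw [Finset.sum_update_of_mem (Finset.mem_univ i)]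
  have := Finset.add_sum_erase Finset.univ m (Finset.mem_univ i)
  rw [← this, Finset.erase_eq]; ring

end Aux
section Aux2
variable {n : ℕ} {S : Finset (Fin n)}

lemma bmono_single {m : Fin n → ℤ} (h : AllowedExp S m) :
    bmono S m = Finsupp.single ⟨m, h⟩ 1 := dif_pos h

lemma tOp_bmono {m : Fin n → ℤ} (h : AllowedExp S m) (i : Fin n) :
    tOp S i (bmono S m) = bmono S (Function.update m i (m i + 1)) := by
  rw [bmono_single h, tOp_single h]

lemma dOp_bmono {m : Fin n → ℤ} (h : AllowedExp S m) (i : Fin n) :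
    dOp S i (bmono S m) = (m i : ℂ) • bmono S (Function.update m i (m i - 1)) := by
  rw [bmono_single h, dOp_single h]

lemma allowed_sub {m : Fin n → ℤ} (h : AllowedExp S m) {j : Fin n} (hz : m j ≠ 0) :
    AllowedExp S (Function.update m j (m j - 1)) := by
  intro l
  rcases eq_or_ne l j with rfl | hl
  · have := h l
    simp only [Function.update_self]
    split_ifs at this ⊢ <;> omega
  · simpa [Function.update_of_ne hl] using h l

lemma tOp_mem {d : ℤ} {v : TgS n S} (i : Fin n) (hv : v ∈ Td S d) :
    tOp S i v ∈ Td S (d + 1) := by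
  induction hv using Submodule.span_induction with
  | mem x hx =>
    obtain ⟨m, h, hd, rfl⟩ := hx
    rw [tOp_single h]
    exact bmono_mem_Td (by rw [sum_update]; omega)
  | zero => simp
  | add x y hx hy ihx ihy => rw [map_add]; exact add_mem ihx ihy
  | smul a x hx ihx => rw [_root_.map_smul]; exact Submodule.smul_mem _ _ ihx

lemma dOp_mem {d : ℤ} {v : TgS n S} (i : Fin n) (hv : v ∈ Td S d) :
    dOp S i v ∈ Td S (d - 1) := by
  induction hv using Submodule.span_induction with
  | mem x hx =>
    obtain ⟨m, h, hd, rfl⟩ := hx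
    rw [dOp_single h]
    exact Submodule.smul_mem _ _ (bmono_mem_Td (by rw [sum_update]; omega))
  | zero => simp
  | add x y hx hy ihx ihy => rw [map_add]; exact add_mem ihx ihy
  | smul a x hx ihx => rw [_root_.map_smul]; exact Submodule.smul_mem _ _ ihx

lemma pMul_mem {d : ℤ} {v : TgS n S} (p : MvPolynomial (Fin n) ℂ) (hv : v ∈ Td S d) :
    pMul S p v ∈ Td S d := by
  induction hv using Submodule.span_induction with
  | mem x hx =>
    obtain ⟨m, h, hd, rfl⟩ := hx
    rw [pMul_single h, Finsupp.sum]
    refine Submodule.sum_mem _ fun k hk => Submodule.smul_mem _ _ (bmono_mem_Td ?_)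
    have : (0:ℤ) ≤ ∑ i, (k i : ℤ) := Finset.sum_nonneg fun i _ => Int.natCast_nonneg _
    rw [Finset.sum_add_distrib]
    omega
  | zero => simp
  | add x y hx hy ihx ihy => rw [map_add]; exact add_mem ihx ihy
  | smul a x hx ihx => rw [_root_.map_smul]; exact Submodule.smul_mem _ _ ihx

lemma dgOp_mem {d : ℤ} {v : TgS n S} (g : MvPolynomial (Fin n) ℂ) (i : Fin n)
    (hv : v ∈ Td S d) : dgOp S g i v ∈ Td S (d - 1) := by
  have : dgOp S g i v = dOp S i v + pMul S (pderiv i g) v := rfl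
  rw [this]
  exact add_mem (dOp_mem i hv) (Td_mono (by omega) (pMul_mem _ hv))

lemma tOp_dOp_bmono (j : Fin n) (m' : Fin n → ℤ) :
    tOp S j (dOp S j (bmono S m')) = (m' j : ℂ) • bmono S m' := by
  by_cases h' : AllowedExp S m'
  · rw [dOp_bmono h', _root_.map_smul]
    by_cases hz : m' j = 0
    · simp [hz]
    · rw [tOp_bmono (allowed_sub h' hz)]
      congr 1
      rw [Function.update_self, Function.update_idem, sub_add_cancel,
        Function.update_eq_self]
  · simp [bmono, h']

end Aux2
section Aux3
variable {n : ℕ} {S : Finset (Fin n)}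

lemma dgOp_single_decomp (g : MvPolynomial (Fin n) ℂ) (i : Fin n) {m : Fin n → ℤ}
    (h : AllowedExp S m) :
    ∃ w ∈ Td S (∑ j, m j),
      dgOp S g i (Finsupp.single ⟨m, h⟩ 1)
        = (m i : ℂ) • bmono S (Function.update m i (m i - 1)) + w := by
  refine ⟨pMul S (pderiv i g) (Finsupp.single ⟨m, h⟩ 1),
    pMul_mem _ (single_mem_Td h le_rfl), ?_⟩
  have h1 : dgOp S g i (Finsupp.single ⟨m, h⟩ 1)
      = dOp S i (Finsupp.single ⟨m, h⟩ 1)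
        + pMul S (pderiv i g) (Finsupp.single ⟨m, h⟩ 1) := rfl
  rw [h1, dOp_single h]

lemma sum_tOp_dgOp_decomp (g : MvPolynomial (Fin n) ℂ) (i : Fin n) {m : Fin n → ℤ}
    (h : AllowedExp S m) :
    ∃ w ∈ Td S (∑ j, m j),
      (∑ j, tOp S j ∘ₗ dgOp S g j ∘ₗ dgOp S g i) (Finsupp.single ⟨m, h⟩ 1)
        = ((m i : ℂ) * (((∑ j, m j : ℤ) : ℂ) - 1)) •
            bmono S (Function.update m i (m i - 1)) + w := by
  set x : TgS n S := Finsupp.single ⟨m, h⟩ 1 with hxdef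
  set s : ℤ := ∑ j, m j with hsdef
  set u : TgS n S := bmono S (Function.update m i (m i - 1)) with hudef
  obtain ⟨w₁, hw₁, hdx⟩ := dgOp_single_decomp g i h
  have hu_mem : u ∈ Td S (s - 1) := bmono_mem_Td (by rw [sum_update]; omega)
  have hterm : ∀ j, (tOp S j ∘ₗ dgOp S g j ∘ₗ dgOp S g i) x
      = (((m i : ℂ) * ((Function.update m i (m i - 1)) j : ℂ)) • u)
        + ((m i : ℂ) • tOp S j (pMul S (pderiv j g) u) + tOp S j (dgOp S g j w₁)) := by
    intro j
    have h1 : dgOp S g j u = dOp S j u + pMul S (pderiv j g) u := rfl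
    simp only [LinearMap.comp_apply]
    rw [hdx, map_add, _root_.map_smul, map_add, _root_.map_smul, h1, map_add,
      tOp_dOp_bmono, smul_add, smul_smul, add_assoc]
  refine ⟨∑ j, ((m i : ℂ) • tOp S j (pMul S (pderiv j g) u) + tOp S j (dgOp S g j w₁)),
    ?_, ?_⟩
  · refine Submodule.sum_mem _ fun j _ => add_mem ?_ ?_
    · refine Submodule.smul_mem _ _ ?_
      have := tOp_mem j (pMul_mem (pderiv j g) hu_mem)
      rwa [sub_add_cancel] at this
    · have := tOp_mem j (dgOp_mem g j hw₁)
      rwa [sub_add_cancel] at this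
  · rw [LinearMap.sum_apply]
    simp_rw [hterm]
    rw [Finset.sum_add_distrib]
    congr 1
    rw [← Finset.sum_smul, ← Finset.mul_sum]
    congr 2
    have hsum : ∑ j, Function.update m i (m i - 1) j = s - 1 := by
      rw [sum_update]; omega
    calc ∑ j, ((Function.update m i (m i - 1) j : ℤ) : ℂ)
        = ((∑ j, Function.update m i (m i - 1) j : ℤ) : ℂ) := by push_cast; rfl
      _ = ((s : ℂ) - 1) := by rw [hsum]; push_cast; ring

lemma up_mem (g : MvPolynomial (Fin n) ℂ) (a : ℂ) (N : ℤ)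
    (hN : ((n : ℂ) + 1) * (a - 1) = N) (i : Fin n) {v : TgS n S}
    (hv : v ∈ Td S (N + 1)) :
    ((∑ j, tOp S j ∘ₗ dgOp S g j ∘ₗ dgOp S g i)
        + (((n : ℂ) + 1) * (1 - a)) • dgOp S g i) v ∈ Td S (N + 1) := by
  induction hv using Submodule.span_induction with
  | mem x hx =>
    obtain ⟨m, h, hd, rfl⟩ := hx
    obtain ⟨w, hw, hw_eq⟩ := sum_tOp_dgOp_decomp g i h
    obtain ⟨w', hw', hw'_eq⟩ := dgOp_single_decomp g i h
    have hc : ((n : ℂ) + 1) * (1 - a) = -(N : ℂ) := by rw [← hN]; ring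
    erw [LinearMap.add_apply, LinearMap.smul_apply]
    rw [hw_eq, hw'_eq, hc]
    set s : ℤ := ∑ j, m j with hsdef
    have expand : ((m i : ℂ) * ((s : ℂ) - 1)) • bmono S (Function.update m i (m i - 1)) + w
        + (-(N : ℂ)) • ((m i : ℂ) • bmono S (Function.update m i (m i - 1)) + w')
        = ((m i : ℂ) * ((s : ℂ) - 1 - N)) • bmono S (Function.update m i (m i - 1))
          + (w + (-(N : ℂ)) • w') := by
      module
    rw [expand]
    refine add_mem ?_ (add_mem (Td_mono (by omega) hw)
      (Submodule.smul_mem _ _ (Td_mono (by omega) hw')))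
    rcases eq_or_lt_of_le hd with heq | hlt
    · have hz : ((s : ℂ) - 1 - N) = 0 := by rw [← heq]; push_cast; ring
      rw [hz, mul_zero, zero_smul]; exact zero_mem _
    · exact Submodule.smul_mem _ _ (bmono_mem_Td (by rw [sum_update]; omega))
  | zero => simp
  | add x y hx hy ihx ihy => rw [map_add]; exact add_mem ihx ihy
  | smul a x hx ihx => rw [_root_.map_smul]; exact Submodule.smul_mem _ _ ihx

end Aux3
section Aux4

lemma trace_split {n : ℕ} (A : Matrix (Fin (n+1)) (Fin (n+1)) ℂ) (hA : A.trace = 0) :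
    ∑ k : Fin n, A k.castSucc k.castSucc = - A (Fin.last n) (Fin.last n) := by
  have h : ∑ p : Fin (n+1), A p p = 0 := by
    simpa [Matrix.trace, Matrix.diag] using hA
  rw [Fin.sum_univ_castSucc] at h
  linear_combination h

lemma matrix_decomp {n : ℕ} (A : Matrix (Fin (n+1)) (Fin (n+1)) ℂ) (hA : A.trace = 0) :
    A = (∑ p : Fin (n+1), ∑ q : Fin (n+1),
          (if q = p then 0 else A p q) • Matrix.single p q (1:ℂ))
      + ∑ k : Fin n, (A k.castSucc k.castSucc - A (Fin.last n) (Fin.last n)) •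
          (Matrix.single k.castSucc k.castSucc (1:ℂ) - ((n:ℂ)+1)⁻¹ • 1) := by
  have hcard : ((n:ℂ)+1) ≠ 0 := Nat.cast_add_one_ne_zero n
  have hsumc : ∑ k : Fin n, (A k.castSucc k.castSucc - A (Fin.last n) (Fin.last n))
      = -((n:ℂ)+1) * A (Fin.last n) (Fin.last n) := by
    rw [Finset.sum_sub_distrib, trace_split A hA, Finset.sum_const, Finset.card_univ,
      Fintype.card_fin]
    push_cast
    ring
  ext r t
  simp only [Matrix.add_apply, Matrix.sum_apply, Matrix.smul_apply, Matrix.sub_apply,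
    Matrix.one_apply, Matrix.single, Matrix.of_apply, smul_eq_mul, mul_ite, mul_one,
    mul_zero]
  have hsum1 : (∑ p : Fin (n+1), ∑ q : Fin (n+1),
      if p = r ∧ q = t then (if q = p then (0:ℂ) else A p q) else 0)
      = if t = r then 0 else A r t := by
    rw [Finset.sum_eq_single r]
    · rw [Finset.sum_eq_single t]
      · simp
      · intro q _ hq; simp [hq]
      · simp
    · intro p _ hp
      exact Finset.sum_eq_zero fun q _ => by simp [hp]
    · simp
  rw [hsum1]
  rcases eq_or_ne r t with rfl | hrt
  · simp only [eq_self_iff_true, and_self, if_true, zero_add]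
    have h2 : (∑ k : Fin n,
        (A k.castSucc k.castSucc - A (Fin.last n) (Fin.last n)) *
          ((if k.castSucc = r then (1:ℂ) else 0) - ((n:ℂ)+1)⁻¹))
        = (∑ k : Fin n, (A k.castSucc k.castSucc - A (Fin.last n) (Fin.last n)) *
            (if k.castSucc = r then (1:ℂ) else 0))
          - (∑ k : Fin n, (A k.castSucc k.castSucc - A (Fin.last n) (Fin.last n)))
            * ((n:ℂ)+1)⁻¹ := by
      rw [Finset.sum_mul, ← Finset.sum_sub_distrib]
      exact Finset.sum_congr rfl fun k _ => by ring
    rw [h2, hsumc]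
    induction r using Fin.lastCases with
    | last =>
      rw [Finset.sum_eq_zero fun k _ => by simp [(Fin.castSucc_lt_last k).ne]]
      field_simp
      ring
    | cast k₀ =>
      have h3 : (∑ k : Fin n, (A k.castSucc k.castSucc - A (Fin.last n) (Fin.last n)) *
          (if k.castSucc = k₀.castSucc then (1:ℂ) else 0))
          = A k₀.castSucc k₀.castSucc - A (Fin.last n) (Fin.last n) := by
        rw [Finset.sum_eq_single k₀]
        · simp
        · intro k _ hk; simp [Fin.castSucc_inj, hk]
        · simp
      rw [h3]
      field_simp
      ring
  · have h4 : (∑ k : Fin n,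
        (A k.castSucc k.castSucc - A (Fin.last n) (Fin.last n)) *
          ((if k.castSucc = r ∧ k.castSucc = t then (1:ℂ) else 0)
            - if r = t then ((n:ℂ)+1)⁻¹ else 0)) = 0 := by
      refine Finset.sum_eq_zero fun k _ => ?_
      have : ¬(k.castSucc = r ∧ k.castSucc = t) := fun ⟨h1, h2⟩ => hrt (h1 ▸ h2 ▸ rfl)
      simp [this, hrt]
    rw [h4, if_neg (Ne.symm hrt)]
    ring

end Aux4
section Aux5

noncomputable def Hel (n : ℕ) (k : Fin n) : sl (Fin (n+1)) ℂ :=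
  ⟨Matrix.single k.castSucc k.castSucc 1 - ((n:ℂ)+1)⁻¹ • 1, by
    have : (Matrix.single (Fin.castSucc k) (Fin.castSucc k) (1:ℂ)
        - ((n:ℂ)+1)⁻¹ • 1).trace = 0 := by
      rw [Matrix.trace_sub, Matrix.trace_single_eq_same, Matrix.trace_smul,
        Matrix.trace_one, Fintype.card_fin, smul_eq_mul]
      have hcard : ((n:ℂ)+1) ≠ 0 := Nat.cast_add_one_ne_zero n
      push_cast
      field_simp
      ring
    exact LinearMap.mem_ker.2 this⟩

@[simp] lemma Hel_val {n : ℕ} (k : Fin n) :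
    ((Hel n k : sl (Fin (n+1)) ℂ) : Matrix (Fin (n+1)) (Fin (n+1)) ℂ)
      = Matrix.single k.castSucc k.castSucc 1 - ((n:ℂ)+1)⁻¹ • 1 := rfl

lemma sl_coe_add {n : ℕ} (X Y : sl (Fin n) ℂ) :
    ((X + Y : sl (Fin n) ℂ) : Matrix (Fin n) (Fin n) ℂ) = (X : Matrix (Fin n) (Fin n) ℂ) + Y := rfl

lemma sl_coe_smul {n : ℕ} (c : ℂ) (Y : sl (Fin n) ℂ) :
    ((c • Y : sl (Fin n) ℂ) : Matrix (Fin n) (Fin n) ℂ) = c • (Y : Matrix (Fin n) (Fin n) ℂ) := rfl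

lemma sl_coe_sum {n : ℕ} {α : Type} (s : Finset α) (f : α → sl (Fin n) ℂ) :
    ((∑ x ∈ s, f x : sl (Fin n) ℂ) : Matrix (Fin n) (Fin n) ℂ)
      = ∑ x ∈ s, ((f x : Matrix (Fin n) (Fin n) ℂ)) :=
  AddSubmonoidClass.coe_finset_sum f s

lemma sl_decomp {n : ℕ} (Y : sl (Fin (n+1)) ℂ) :
    Y = (∑ p : Fin (n+1), ∑ q : Fin (n+1), if hqp : q = p then 0 else
          ((Y : Matrix (Fin (n+1)) (Fin (n+1)) ℂ) p q) • LieAlgebra.SpecialLinear.single p q (Ne.symm hqp) 1)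
      + ∑ k : Fin n,
          ((Y : Matrix (Fin (n+1)) (Fin (n+1)) ℂ) k.castSucc k.castSucc
            - (Y : Matrix (Fin (n+1)) (Fin (n+1)) ℂ) (Fin.last n) (Fin.last n)) • Hel n k := by
  have hA : (Y : Matrix (Fin (n+1)) (Fin (n+1)) ℂ).trace = 0 := LinearMap.mem_ker.1 Y.2
  apply Subtype.ext
  rw [sl_coe_add, sl_coe_sum, sl_coe_sum]
  simp only [sl_coe_sum, sl_coe_smul, Hel_val]
  have hd : ∀ p q : Fin (n+1),
      Subtype.val (if hqp : q = p then (0 : sl (Fin (n+1)) ℂ) else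
        ((Y : Matrix (Fin (n+1)) (Fin (n+1)) ℂ) p q) • LieAlgebra.SpecialLinear.single p q (Ne.symm hqp) 1)
      = (if q = p then 0 else (Y : Matrix (Fin (n+1)) (Fin (n+1)) ℂ) p q)
          • Matrix.single p q (1:ℂ) := by
    intro p q
    by_cases h : q = p
    · simp [h]
    · simp [h, sl_coe_smul]
  simp only [hd]
  exact matrix_decomp _ hA

end Aux5
/-- if `(n+1)(a-1) = N ∈ ℤ`, then in the exponential tensor module
`T(g,V_a,S)` the span `T'` of the basis monomials `e^g t^m` with `Σ_j m_j ≥ N + 1` is an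
`sl(n+1)`-submodule.  The `sl(n+1)`-action is via `ω_{V_a,∅}` twisted by `ψ_S` and `θ_g`. -/
theorem degree_filtration_submodule (n : ℕ) (hn : 1 ≤ n) (S : Finset (Fin n))
    (g : MvPolynomial (Fin n) ℂ) (hg : constantCoeff g = 0) (a : ℂ) (N : ℤ)
    (hN : ((n : ℂ) + 1) * (a - 1) = N)
    (π : sl (Fin (n + 1)) ℂ →ₗ⁅ℂ⁆ Module.End ℂ (TgS n S))
    (hπh : ∀ (k : Fin n) (Y : sl (Fin (n + 1)) ℂ),
      (Y : Matrix (Fin (n + 1)) (Fin (n + 1)) ℂ) =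
          Matrix.single k.castSucc k.castSucc 1 - ((n : ℂ) + 1)⁻¹ • 1 →
        π Y = -(tOp S k ∘ₗ dgOp S g k) + (a - 1) • LinearMap.id)
    (hπe : ∀ (i j : Fin n), i ≠ j → ∀ Y : sl (Fin (n + 1)) ℂ,
      (Y : Matrix (Fin (n + 1)) (Fin (n + 1)) ℂ) =
          Matrix.single i.castSucc j.castSucc 1 →
        π Y = -(tOp S j ∘ₗ dgOp S g i))
    (hπlow : ∀ (j : Fin n) (Y : sl (Fin (n + 1)) ℂ),
      (Y : Matrix (Fin (n + 1)) (Fin (n + 1)) ℂ) =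
          Matrix.single (Fin.last n) j.castSucc 1 →
        π Y = -tOp S j)
    (hπup : ∀ (i : Fin n) (Y : sl (Fin (n + 1)) ℂ),
      (Y : Matrix (Fin (n + 1)) (Fin (n + 1)) ℂ) =
          Matrix.single i.castSucc (Fin.last n) 1 →
        π Y = (∑ j : Fin n, tOp S j ∘ₗ dgOp S g j ∘ₗ dgOp S g i)
            + (((n : ℂ) + 1) * (1 - a)) • dgOp S g i) :
    ∀ v ∈ Submodule.span ℂ
        {v : TgS n S | ∃ (m : Fin n → ℤ) (h : AllowedExp S m),
          N + 1 ≤ ∑ i, m i ∧ v = Finsupp.single ⟨m, h⟩ 1},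
      ∀ Y : sl (Fin (n + 1)) ℂ,
        π Y v ∈ Submodule.span ℂ
          {v : TgS n S | ∃ (m : Fin n → ℤ) (h : AllowedExp S m),
            N + 1 ≤ ∑ i, m i ∧ v = Finsupp.single ⟨m, h⟩ 1} := by
  have main : ∀ Y : sl (Fin (n + 1)) ℂ, ∀ v ∈ Td S (N + 1), π Y v ∈ Td S (N + 1) := by
    set P : sl (Fin (n + 1)) ℂ → Prop :=
      fun Y => ∀ v ∈ Td S (N + 1), π Y v ∈ Td S (N + 1) with hP
    have Pzero : P 0 := by
      intro v hv
      rw [map_zero]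
      simpa using zero_mem (Td S (N + 1))
    have Padd : ∀ Y Z, P Y → P Z → P (Y + Z) := by
      intro Y Z hY hZ v hv
      rw [map_add, LinearMap.add_apply]
      exact add_mem (hY v hv) (hZ v hv)
    have Psmul : ∀ (c : ℂ) (Y), P Y → P (c • Y) := by
      intro c Y hY v hv
      rw [_root_.map_smul, LinearMap.smul_apply]
      exact Submodule.smul_mem _ _ (hY v hv)
    intro Y
    rw [sl_decomp Y]
    refine Padd _ _ ?_ ?_
    · refine Finset.sum_induction _ P Padd Pzero fun p _ => ?_
      refine Finset.sum_induction _ P Padd Pzero fun q _ => ?_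
      by_cases hqp : q = p
      · rw [dif_pos hqp]; exact Pzero
      · rw [dif_neg hqp]
        refine Psmul _ _ ?_
        induction p using Fin.lastCases with
        | last =>
          induction q using Fin.lastCases with
          | last => exact absurd rfl hqp
          | cast j =>
            intro v hv
            rw [hπlow j (LieAlgebra.SpecialLinear.single (Fin.last n) j.castSucc (Ne.symm hqp) 1) rfl, LinearMap.neg_apply]
            refine neg_mem (Td_mono (by omega) (tOp_mem j hv))
        | cast i =>
          induction q using Fin.lastCases with
          | last =>
            intro v hv
            rw [hπup i (LieAlgebra.SpecialLinear.single i.castSucc (Fin.last n) (Ne.symm hqp) 1) rfl]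
            exact up_mem g a N hN i hv
          | cast j =>
            have hij : i ≠ j := fun h => hqp (by rw [h])
            intro v hv
            rw [hπe i j hij (LieAlgebra.SpecialLinear.single i.castSucc j.castSucc (Ne.symm hqp) 1) rfl, LinearMap.neg_apply,
              LinearMap.comp_apply]
            refine neg_mem ?_
            have := tOp_mem j (dgOp_mem g i hv)
            rwa [sub_add_cancel] at this
    · refine Finset.sum_induction _ P Padd Pzero fun k _ => ?_
      refine Psmul _ _ ?_
      intro v hv
      rw [hπh k (Hel n k) rfl, LinearMap.add_apply, LinearMap.neg_apply,
        LinearMap.comp_apply, LinearMap.smul_apply, LinearMap.id_apply]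
      refine add_mem (neg_mem ?_) (Submodule.smul_mem _ _ hv)
      have := tOp_mem k (dgOp_mem g k hv)
      rwa [sub_add_cancel] at this
  intro v hv Y
  exact main Y v hv
end
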